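/- Let \nu > 0, let z_1 > ... > z_N > 0 be the zeros of L_N^{(\nu-1)}, set r_i = \sqrt{2 z_i}, and let S_N be the N\times N matrix with s_{ii} = 1 + 2\nu/r_i^2 + 2\sum_{l\ne i}[(r_i - r_l)^{-2} + (r_i + r_l)^{-2}] and s_{ij} = 2(r_i + r_j)^{-2} - 2(r_i - r_j)^{-2} for i \ne j. Then for any vector v \in \mathbb{R}^N, (S_N v)_i = 2[ v_i + 4 \sum_{l \ne i} r_l ( v_i r_l - v_l r_i )/(r_i^2 - r_l^2)^2 ]. -/

import Mathlib

open Polynomial Finset Matrix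

/-- The generalized Laguerre polynomials `L_n^{(α)}`, orthogonal w.r.t. the weight
`e^{-x} x^α` on `(0,∞)`, defined via the standard three-term recurrence. -/
noncomputable def laguerre (α : ℝ) : ℕ → Polynomial ℝ
  | 0 => 1
  | 1 => C (1 + α) - X
  | n + 2 => C (((n : ℝ) + 2)⁻¹) *
      ((C (2 * (n : ℝ) + 3 + α) - X) * laguerre α (n + 1) - C ((n : ℝ) + 1 + α) * laguerre α n)

lemma laguerre_rec (α : ℝ) (n : ℕ) :
    C ((n : ℝ) + 2) * laguerre α (n + 2) =
      (C (2 * (n : ℝ) + 3 + α) - X) * laguerre α (n + 1) - C ((n : ℝ) + 1 + α) * laguerre α n := by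
  have h : ((n:ℝ) + 2) ≠ 0 := by positivity
  rw [laguerre, ← mul_assoc, ← C_mul, mul_inv_cancel₀ h, C_1, one_mul]

lemma laguerre_AB (α : ℝ) : ∀ n : ℕ,
    derivative (laguerre α (n + 1)) = derivative (laguerre α n) - laguerre α n ∧
    X * derivative (laguerre α (n + 1)) =
      C ((n : ℝ) + 1) * laguerre α (n + 1) - C ((n : ℝ) + 1 + α) * laguerre α n := by
  intro n
  induction n with
  | zero =>
    constructor
    · simp [laguerre]
    · simp [laguerre]
  | succ n ih =>
    obtain ⟨ihA, ihB⟩ := ih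
    have hC : (C ((n:ℝ) + 2) : ℝ[X]) ≠ 0 := by
      simp only [ne_eq, C_eq_zero]
      positivity
    have hrec := laguerre_rec α n
    have hrec' := congrArg derivative hrec
    simp only [derivative_mul, derivative_sub, derivative_C, derivative_X, zero_mul, mul_one,
      zero_sub, zero_add, add_zero, sub_zero] at hrec'
    simp only [C_add, C_mul, C_1, map_ofNat] at hrec' hrec ihA ihB
    have hA2 : derivative (laguerre α (n+2)) = derivative (laguerre α (n+1)) - laguerre α (n+1) := by
      refine mul_left_cancel₀ hC ?_
      simp only [C_add, map_ofNat]
      linear_combination hrec' - ihB + (C ((n:ℝ)) + 1 + C α) * ihA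
    have hB2 : X * derivative (laguerre α (n+2)) =
        C ((n:ℝ) + 2) * laguerre α (n+2) - C ((n:ℝ) + 2 + α) * laguerre α (n+1) := by
      rw [hA2]
      simp only [C_add, map_ofNat]
      linear_combination ihB - hrec
    refine ⟨hA2, ?_⟩
    simp only [Nat.cast_add, Nat.cast_one, C_add, C_1, map_ofNat] at hB2 ⊢
    linear_combination hB2

lemma laguerre_ode (α : ℝ) (n : ℕ) :
    X * derivative (derivative (laguerre α n)) + (C (α + 1) - X) * derivative (laguerre α n)
      + C (n : ℝ) * laguerre α n = 0 := by
  cases n with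
  | zero => simp [laguerre]
  | succ n =>
    obtain ⟨hA, hB⟩ := laguerre_AB α n
    have hB' := congrArg derivative hB
    simp only [derivative_mul, derivative_sub, derivative_C, derivative_X, zero_mul, mul_one,
      zero_sub, zero_add, add_zero, sub_zero, one_mul] at hB'
    simp only [Nat.cast_add, Nat.cast_one, C_add, C_mul, C_1, map_ofNat] at hB' hB hA ⊢
    linear_combination hB' - hB + (C ((n:ℝ)) + 1 + C α) * hA

lemma laguerre_deg (α : ℝ) : ∀ n : ℕ,
    (laguerre α n).natDegree ≤ n ∧ (laguerre α n).coeff n = (-1)^n / n.factorial := by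
  intro n
  induction n using Nat.twoStepInduction with
  | zero => simp [laguerre]
  | one =>
    constructor
    · rw [laguerre]
      compute_degree
    · rw [laguerre]
      simp [coeff_sub, coeff_C, coeff_one]
  | more n ih1 ih2 =>
    obtain ⟨hd1, hc1⟩ := ih2
    obtain ⟨hd0, hc0⟩ := ih1
    have hrec := laguerre_rec α n
    have hC : (C ((n:ℝ) + 2) : ℝ[X]) ≠ 0 := by
      simp only [ne_eq, C_eq_zero]; positivity
    constructor
    · rw [laguerre]
      apply le_trans (natDegree_mul_le)
      simp only [natDegree_C, zero_add]
      apply le_trans (natDegree_sub_le _ _)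
      simp only [max_le_iff]
      have h1 : (C (2*(n:ℝ)+3+α) - X).natDegree ≤ 1 := by
        apply le_trans (natDegree_sub_le _ _)
        rw [natDegree_C, natDegree_X]
        omega
      constructor
      · apply le_trans (natDegree_mul_le)
        omega
      · apply le_trans (natDegree_mul_le)
        simp only [natDegree_C, zero_add]
        omega
    · have e1 : (laguerre α (n+1)).coeff (n+2) = 0 :=
        coeff_eq_zero_of_natDegree_lt (by omega)
      have e0 : (laguerre α n).coeff (n+2) = 0 :=
        coeff_eq_zero_of_natDegree_lt (by omega)
      have eX : (X * laguerre α (n+1)).coeff (n+2) = (laguerre α (n+1)).coeff (n+1) :=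
        coeff_X_mul (laguerre α (n+1)) (n+1)
      have h2 := congrArg (fun p => coeff p (n+2)) hrec
      simp only [sub_mul, coeff_C_mul, coeff_sub] at h2
      rw [eX, e0, e1, hc1] at h2
      have hf2 : (((n+2).factorial : ℕ) : ℝ) = ((n:ℝ)+2) * ((n+1).factorial : ℕ) := by
        rw [show n+2 = (n+1)+1 from rfl, Nat.factorial_succ]
        push_cast
        ring
      have hf1 : (((n+1).factorial : ℕ) : ℝ) ≠ 0 := Nat.cast_ne_zero.mpr (Nat.factorial_ne_zero _)
      rw [hf2, eq_div_iff (by positivity)]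
      field_simp at h2
      linear_combination h2

lemma derivative_finset_prod {ι : Type*} [DecidableEq ι] (s : Finset ι) (f : ι → Polynomial ℝ) :
    derivative (∏ j ∈ s, f j) = ∑ j ∈ s, (∏ k ∈ s.erase j, f k) * derivative (f j) := by
  induction s using Finset.induction_on with
  | empty => simp
  | @insert a s ha ih =>
    rw [Finset.prod_insert ha, derivative_mul, ih, Finset.sum_insert ha, Finset.erase_insert ha,
      Finset.mul_sum]
    congr 1
    · ring
    refine Finset.sum_congr rfl fun j hj => ?_
    rw [Finset.erase_insert_of_ne (by rintro rfl; exact ha hj),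
      Finset.prod_insert (fun h => ha (Finset.mem_of_mem_erase h))]
    ring

lemma key_sum (N : ℕ) (ν : ℝ) (z : Fin N → ℝ)
    (hinj : Function.Injective z)
    (hpos : ∀ i, 0 < z i)
    (hroot : ∀ i, (laguerre (ν - 1) N).eval (z i) = 0)
    (i : Fin N) :
    ∑ l ∈ Finset.univ.erase i, (z i - z l)⁻¹ = (z i - ν) / (2 * z i) := by
  set p := laguerre (ν - 1) N with hp
  have hcoef : p.coeff N ≠ 0 := by
    rw [(laguerre_deg (ν - 1) N).2]
    have : (N.factorial : ℝ) ≠ 0 := Nat.cast_ne_zero.mpr (Nat.factorial_ne_zero _)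
    positivity
  have hpne : p ≠ 0 := fun h => hcoef (by simp [h])
  have hdegN : p.natDegree = N :=
    le_antisymm (laguerre_deg (ν - 1) N).1 (le_natDegree_of_ne_zero hcoef)
  set m : Multiset ℝ := Multiset.map z Finset.univ.val with hm
  have hnod : m.Nodup := Finset.univ.nodup.map hinj
  have hsub : m ⊆ p.roots := by
    intro a ha
    obtain ⟨j, _, rfl⟩ := Multiset.mem_map.mp ha
    exact mem_roots'.mpr ⟨hpne, hroot j⟩
  have hle : m ≤ p.roots := (Multiset.le_iff_subset hnod).mpr hsub
  have hcardm : Multiset.card m = N := by simp [hm]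
  have heqm : m = p.roots := by
    refine Multiset.eq_of_le_of_card_le hle ?_
    rw [hcardm]
    exact hdegN ▸ p.card_roots'
  have hcard : Multiset.card p.roots = p.natDegree := by rw [← heqm, hcardm, hdegN]
  have hfact := C_leadingCoeff_mul_prod_multiset_X_sub_C hcard
  rw [← heqm, hm, Multiset.map_map] at hfact
  set c := p.leadingCoeff with hcld
  have hc0 : c ≠ 0 := leadingCoeff_ne_zero.mpr hpne
  have hprod : (Multiset.map (fun a => X - C a) m).prod
      = ∏ j : Fin N, (X - C (z j)) := by
    rw [hm, Multiset.map_map]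
    rfl
  have hpf : p = C c * ∏ j : Fin N, (X - C (z j)) := by
    rw [← hfact]
    rfl
  set q : Polynomial ℝ := ∏ j ∈ Finset.univ.erase i, (X - C (z j)) with hq
  have hpf2 : p = C c * ((X - C (z i)) * q) := by
    rw [hpf, hq, ← Finset.mul_prod_erase _ _ (Finset.mem_univ i)]
  have hqe : q.eval (z i) = ∏ j ∈ Finset.univ.erase i, (z i - z j) := by
    simp [hq, eval_prod]
  have hzne : ∀ l ∈ Finset.univ.erase i, z i - z l ≠ 0 := by
    intro l hl
    have : l ≠ i := Finset.ne_of_mem_erase hl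
    exact sub_ne_zero.mpr fun h => this (hinj h.symm)
  have hq0 : q.eval (z i) ≠ 0 := by
    rw [hqe]
    exact Finset.prod_ne_zero_iff.mpr hzne
  have hd1 : (derivative p).eval (z i) = c * q.eval (z i) := by
    rw [hpf2]
    simp [derivative_mul]
  have hd2 : (derivative (derivative p)).eval (z i)
      = 2 * c * (derivative q).eval (z i) := by
    rw [hpf2]
    simp [derivative_mul]
    ring
  have hqd : (derivative q).eval (z i)
      = q.eval (z i) * ∑ l ∈ Finset.univ.erase i, (z i - z l)⁻¹ := by
    rw [hq, derivative_finset_prod]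
    rw [eval_finset_sum]
    rw [Finset.mul_sum]
    refine Finset.sum_congr rfl fun l hl => ?_
    have h1 : (z i - z l) * ∏ j ∈ (Finset.univ.erase i).erase l, (z i - z j)
        = ∏ j ∈ Finset.univ.erase i, (z i - z j) :=
      Finset.mul_prod_erase _ (fun j => z i - z j) hl
    simp only [derivative_sub, derivative_X, derivative_C, sub_zero, mul_one, eval_mul,
      eval_prod, eval_sub, eval_X, eval_C, eval_one]
    rw [eq_mul_inv_iff_mul_eq₀ (hzne l hl)]
    linear_combination h1
  have hode := congrArg (fun P => P.eval (z i)) (laguerre_ode (ν - 1) N)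
  simp only [eval_add, eval_mul, eval_sub, eval_X, eval_C, eval_zero, ← hp] at hode
  rw [hroot i, hd1, hd2, hqd] at hode
  have hzi : z i ≠ 0 := ne_of_gt (hpos i)
  rw [eq_div_iff (by simp [hzi] : 2 * z i ≠ 0)]
  refine mul_right_cancel₀ (mul_ne_zero hc0 hq0) ?_
  linear_combination hode

theorem stmt_13 (N : ℕ) (ν : ℝ) (hν : 0 < ν) (z : Fin N → ℝ)
    (hord : ∀ i j : Fin N, i < j → z j < z i)
    (hpos : ∀ i, 0 < z i)
    (hroot : ∀ i, (laguerre (ν - 1) N).eval (z i) = 0)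
    (r : Fin N → ℝ) (hr : ∀ i, r i = Real.sqrt (2 * z i))
    (S : Matrix (Fin N) (Fin N) ℝ)
    (hS : ∀ i j, S i j = if i = j
      then 1 + 2 * ν / (r i) ^ 2
        + 2 * ∑ l ∈ Finset.univ.erase i, (((r i - r l) ^ 2)⁻¹ + ((r i + r l) ^ 2)⁻¹)
      else 2 * ((r i + r j) ^ 2)⁻¹ - 2 * ((r i - r j) ^ 2)⁻¹) :
    ∀ v : Fin N → ℝ, ∀ i,
      S.mulVec v i = 2 * (v i + 4 * ∑ l ∈ Finset.univ.erase i,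
        r l * (v i * r l - v l * r i) / ((r i) ^ 2 - (r l) ^ 2) ^ 2) := by
  intro v i
  have hzinj : Function.Injective z := by
    intro a b hab
    by_contra hne
    rcases lt_or_gt_of_ne hne with h | h
    · have := hord a b h; rw [hab] at this; exact lt_irrefl _ this
    · have := hord b a h; rw [hab] at this; exact lt_irrefl _ this
  have hkey := key_sum N ν z hzinj hpos hroot i
  have hr2 : ∀ j, (r j) ^ 2 = 2 * z j := fun j => by
    rw [hr]; exact Real.sq_sqrt (by linarith [hpos j])
  have hrpos : ∀ j, 0 < r j := fun j => by
    rw [hr]; exact Real.sqrt_pos.mpr (by linarith [hpos j])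
  have hzi : z i ≠ 0 := ne_of_gt (hpos i)
  -- per-term nonzeroness facts for l ≠ i
  have hfacts : ∀ l ∈ Finset.univ.erase i,
      r i - r l ≠ 0 ∧ r i + r l ≠ 0 ∧ z i - z l ≠ 0 := by
    intro l hl
    have hli : l ≠ i := Finset.ne_of_mem_erase hl
    have hz : z i ≠ z l := fun h => hli (hzinj h.symm)
    refine ⟨?_, ?_, sub_ne_zero.mpr hz⟩
    · intro h
      have : (r i) ^ 2 = (r l) ^ 2 := by
        have : r i = r l := by linarith [sub_eq_zero.mp h]
        rw [this]
      rw [hr2 i, hr2 l] at this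
      exact hz (by linarith)
    · have := hrpos i; have := hrpos l; intro h; linarith
  have hmv : S.mulVec v i = S i i * v i + ∑ l ∈ Finset.univ.erase i, S i l * v l := by
    rw [Matrix.mulVec, dotProduct]
    exact (Finset.add_sum_erase _ _ (Finset.mem_univ i)).symm
  rw [hmv, hS i i, if_pos rfl]
  have hterm : ∀ l ∈ Finset.univ.erase i,
      S i l * v l + 2 * (((r i - r l) ^ 2)⁻¹ + ((r i + r l) ^ 2)⁻¹) * v i
      = 8 * (r l * (v i * r l - v l * r i) / ((r i) ^ 2 - (r l) ^ 2) ^ 2)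
        + 2 * v i * (z i - z l)⁻¹ := by
    intro l hl
    obtain ⟨h1, h2, h3⟩ := hfacts l hl
    have hli : l ≠ i := Finset.ne_of_mem_erase hl
    rw [hS i l, if_neg (fun h => hli h.symm)]
    have hzz : z i - z l = ((r i) ^ 2 - (r l) ^ 2) / 2 := by
      rw [hr2 i, hr2 l]; ring
    rw [hzz]
    have h4 : (r i) ^ 2 - (r l) ^ 2 = (r i - r l) * (r i + r l) := by ring
    rw [h4]
    field_simp
    ring
  have hsum : ∑ l ∈ Finset.univ.erase i,
      (S i l * v l + 2 * (((r i - r l) ^ 2)⁻¹ + ((r i + r l) ^ 2)⁻¹) * v i)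
      = 8 * (∑ l ∈ Finset.univ.erase i,
          r l * (v i * r l - v l * r i) / ((r i) ^ 2 - (r l) ^ 2) ^ 2)
        + 2 * v i * ((z i - ν) / (2 * z i)) := by
    rw [Finset.sum_congr rfl hterm, Finset.sum_add_distrib, ← Finset.mul_sum, ← Finset.mul_sum,
      hkey]
  have hsplit : ∑ l ∈ Finset.univ.erase i,
      (S i l * v l + 2 * (((r i - r l) ^ 2)⁻¹ + ((r i + r l) ^ 2)⁻¹) * v i)
      = ∑ l ∈ Finset.univ.erase i, S i l * v l
        + (2 * ∑ l ∈ Finset.univ.erase i, (((r i - r l) ^ 2)⁻¹ + ((r i + r l) ^ 2)⁻¹)) * v i := by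
    rw [Finset.sum_add_distrib, Finset.mul_sum, Finset.sum_mul]
  rw [hsplit] at hsum
  have hx : 2 * ν / (r i) ^ 2 + 2 * ((z i - ν) / (2 * z i)) = 1 := by
    rw [hr2 i]
    field_simp
    ring
  linear_combination hsum + v i * hx
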